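/- Given sets X = {x_1,...,x_n} and Y = {y_1,...,y_n} of non-negative reals, let K = 2·max(X∪Y)+3 and build a tree T with vertices u, v of weight 0 joined by an edge of length K/2; for each x_i a vertex of weight x_i+1 attached to u by an edge of length K/2 − x_i − 1; for each y_j a vertex of weight K − y_j − 1 attached to v by an edge of length y_j + 1. Then X ∩ Y ≠ ∅ if and only if there exists a set P of vertices of T with total weight at least K and pairwise distances at least K. -/
import Mathlib


/-- Vertices of the tree in the set-disjointness reduction. -/
inductive RV (n : ℕ) where
  | u : RV n
  | v : RV n
  | X (i : Fin n) : RV n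
  | Y (j : Fin n) : RV n
deriving DecidableEq, Fintype

/-- Tree distances in the reduction tree: `X i — u — v — Y j`, with
`d(u, X i) = K/2 - xs i - 1`, `d(u,v) = K/2`, `d(v, Y j) = ys j + 1`. -/
noncomputable def rvDist {n : ℕ} (xs ys : Fin n → ℝ) (K : ℝ) : RV n → RV n → ℝ :=
  fun a b =>
    if a = b then 0
    else
      match a, b with
      | RV.v, RV.Y j => ys j + 1
      | RV.Y j, RV.v => ys j + 1
      | RV.Y i, RV.Y j => (ys i + 1) + (ys j + 1)
      | a, b => du a + du b
  where du : RV n → ℝ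
    | RV.u => 0
    | RV.v => K / 2
    | RV.X i => K / 2 - xs i - 1
    | RV.Y j => K / 2 + ys j + 1

/-- Vertex weights in the reduction tree. -/
noncomputable def rvWeight {n : ℕ} (xs ys : Fin n → ℝ) (K : ℝ) : RV n → ℝ
  | RV.u => 0
  | RV.v => 0
  | RV.X i => xs i + 1
  | RV.Y j => K - ys j - 1

/-- Set disjointness reduction: `X ∩ Y ≠ ∅` iff there is a set `P` of vertices of
total weight at least `K` with pairwise distances at least `K`, where
`K = 2·max(X ∪ Y) + 3`. -/
theorem stmt_6 (n : ℕ) (hn : 0 < n) (xs ys : Fin n → ℝ)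
    (hxs : ∀ i, 0 ≤ xs i) (hys : ∀ j, 0 ≤ ys j)
    (M : ℝ) (hM : ∀ i, xs i ≤ M ∧ ys i ≤ M)
    (hMmem : ∃ i, xs i = M ∨ ys i = M)
    (K : ℝ) (hK : K = 2 * M + 3) :
    (∃ i j, xs i = ys j) ↔
      ∃ P : Finset (RV n),
        K ≤ (∑ a ∈ P, rvWeight xs ys K a) ∧
        ∀ a ∈ P, ∀ b ∈ P, a ≠ b → K ≤ rvDist xs ys K a b := by
  have hM0 : 0 ≤ M := le_trans (hxs ⟨0, hn⟩) (hM ⟨0, hn⟩).1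
  have hK3 : 3 ≤ K := by rw [hK]; linarith
  constructor
  · rintro ⟨i, j, hij⟩
    refine ⟨{RV.X i, RV.Y j}, ?_, ?_⟩
    · rw [Finset.sum_pair (by simp)]
      simp only [rvWeight]; linarith
    · intro a ha b hb hab
      simp only [Finset.mem_insert, Finset.mem_singleton] at ha hb
      rcases ha with rfl | rfl <;> rcases hb with rfl | rfl <;>
        first
          | exact absurd rfl hab
          | (simp [rvDist, rvDist.du]; linarith)
  · rintro ⟨P, hw, hd⟩
    have hwle : ∀ a : RV n, rvWeight xs ys K a ≤ K - 1 := by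
      intro a
      rcases a with _ | _ | i | j <;> simp only [rvWeight]
      · linarith
      · linarith
      · have := (hM i).1; linarith
      · have := hys j; linarith
    have hwnn : ∀ a : RV n, 0 ≤ rvWeight xs ys K a := by
      intro a
      rcases a with _ | _ | i | j <;> simp only [rvWeight]
      · exact le_refl 0
      · exact le_refl 0
      · have := hxs i; linarith
      · have := (hM j).2; linarith
    -- any pair at distance ≥ K must be an (X, Y) pair with xs i ≤ ys j
    have hpair : ∀ a b : RV n, a ≠ b → K ≤ rvDist xs ys K a b →
        ∃ i j, ((a = RV.X i ∧ b = RV.Y j) ∨ (a = RV.Y j ∧ b = RV.X i)) ∧ xs i ≤ ys j := by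
      intro a b hab hdist
      rcases a with _ | _ | i | j <;> rcases b with _ | _ | i' | j'
      · exact absurd rfl hab
      · simp [rvDist, rvDist.du] at hdist; linarith
      · simp [rvDist, rvDist.du] at hdist; have := hxs i'; linarith
      · simp [rvDist, rvDist.du] at hdist; have := (hM j').2; linarith
      · simp [rvDist, rvDist.du] at hdist; linarith
      · exact absurd rfl hab
      · simp [rvDist, rvDist.du] at hdist; have := hxs i'; linarith
      · simp [rvDist, rvDist.du] at hdist; have := (hM j').2; linarith
      · simp [rvDist, rvDist.du] at hdist; have := hxs i; linarith
      · simp [rvDist, rvDist.du] at hdist; have := hxs i; linarith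
      · have hii : i ≠ i' := by simpa using hab
        simp [rvDist, rvDist.du, hii] at hdist
        have := hxs i; have := hxs i'; linarith
      · refine ⟨i, j', Or.inl ⟨rfl, rfl⟩, ?_⟩
        simp [rvDist, rvDist.du] at hdist; linarith
      · simp [rvDist, rvDist.du] at hdist; have := (hM j).2; linarith
      · simp [rvDist, rvDist.du] at hdist; have := (hM j).2; linarith
      · refine ⟨i', j, Or.inr ⟨rfl, rfl⟩, ?_⟩
        simp [rvDist, rvDist.du] at hdist; linarith
      · have hjj : j ≠ j' := by simpa using hab
        simp [rvDist, rvDist.du, hjj] at hdist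
        have := (hM j).2; have := (hM j').2; linarith
    -- P has at least two elements
    have hcard : 1 < P.card := by
      by_contra h
      push_neg at h
      have hsum : ∑ a ∈ P, rvWeight xs ys K a ≤ P.card • (K - 1) :=
        Finset.sum_le_card_nsmul P _ (K - 1) (fun a _ => hwle a)
      rw [nsmul_eq_mul] at hsum
      have h1 : (P.card : ℝ) ≤ 1 := by exact_mod_cast h
      have h2 : (P.card : ℝ) * (K - 1) ≤ 1 * (K - 1) :=
        mul_le_mul_of_nonneg_right h1 (by linarith)
      linarith
    obtain ⟨a, ha, b, hb, hab⟩ := Finset.one_lt_card.mp hcard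
    obtain ⟨i, j, hor, hxy⟩ := hpair a b hab (hd a ha b hb hab)
    -- extract X i ∈ P and Y j ∈ P
    have hXP : RV.X i ∈ P ∧ RV.Y j ∈ P := by
      rcases hor with ⟨rfl, rfl⟩ | ⟨rfl, rfl⟩
      · exact ⟨ha, hb⟩
      · exact ⟨hb, ha⟩
    obtain ⟨hXi, hYj⟩ := hXP
    -- P ⊆ {X i, Y j}
    have hsub : P ⊆ {RV.X i, RV.Y j} := by
      intro c hc
      simp only [Finset.mem_insert, Finset.mem_singleton]
      by_contra hcc
      push_neg at hcc
      obtain ⟨hc1, hc2⟩ := hcc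
      obtain ⟨i1, j1, hor1, _⟩ := hpair c (RV.X i) hc1 (hd c hc (RV.X i) hXi hc1)
      obtain ⟨i2, j2, hor2, _⟩ := hpair c (RV.Y j) hc2 (hd c hc (RV.Y j) hYj hc2)
      rcases hor1 with ⟨hc3, h4⟩ | ⟨hc3, h4⟩
      · exact absurd h4 (by simp)
      · rcases hor2 with ⟨hc5, h6⟩ | ⟨hc5, h6⟩
        · rw [hc3] at hc5; exact absurd hc5 (by simp)
        · exact absurd h6 (by simp)
    have hsumle : ∑ a ∈ P, rvWeight xs ys K a ≤ ∑ a ∈ ({RV.X i, RV.Y j} : Finset (RV n)), rvWeight xs ys K a :=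
      Finset.sum_le_sum_of_subset_of_nonneg hsub (fun a _ _ => hwnn a)
    rw [Finset.sum_pair (by simp)] at hsumle
    have e1 : rvWeight xs ys K (RV.X i) = xs i + 1 := rfl
    have e2 : rvWeight xs ys K (RV.Y j) = K - ys j - 1 := rfl
    rw [e1, e2] at hsumle
    exact ⟨i, j, le_antisymm hxy (by linarith)⟩
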